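/- If there exists a nonsingular k×k matrix E over the finite field F_q containing a k×s submatrix E_1 (consisting of s columns of E) with the property that every t rows of E_1 are linearly independent, then there exists a large set of orthogonal arrays LOA(q^s; t, k, q). -/
import Mathlib


open Finset

/-- An orthogonal array of strength `t` with `k` rows (constraints), columns indexed
by `ι`, symbols in `α`, and index `lam`: in every choice of `t` distinct rows,
every `t`-tuple of symbols appears in exactly `lam` columns. -/
def IsOAOn {α ι : Type*} [Fintype α] [DecidableEq α] [Fintype ι] {k : ℕ} (t : ℕ)
    (A : Fin k → ι → α) (lam : ℕ) : Prop :=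
  ∀ rows : Fin t → Fin k, Function.Injective rows → ∀ x : Fin t → α,
    (Finset.univ.filter fun c : ι => ∀ i, A (rows i) c = x i).card = lam

/-- An array is simple if no two of its columns are identical. -/
def IsSimpleArr {α ι : Type*} {k : ℕ} (A : Fin k → ι → α) : Prop :=
  Function.Injective fun c : ι => fun i => A i c

/-- A large set of orthogonal arrays: a family (indexed by `σ`) of simple OAs of
strength `t` and index `lam` such that every `k`-tuple of symbols occurs as a
column of exactly one array of the family. -/
def IsLOAOn {α ι σ : Type*} [Fintype α] [DecidableEq α] [Fintype ι] {k : ℕ} (t : ℕ)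
    (A : σ → Fin k → ι → α) (lam : ℕ) : Prop :=
  (∀ s, IsOAOn t (A s) lam ∧ IsSimpleArr (A s)) ∧
  ∀ x : Fin k → α, ∃! p : σ × ι, (fun i => A p.1 i p.2) = x

/-- A strong double large set of orthogonal arrays `SDLOA(N; t, k, v)`:
the family `A_0, …, A_{N-1}` is an LOA, the derived arrays `B_j`
(whose `s`-th column is the `j`-th column of `A_s`) form an LOA, and the arrays
`D` (`j`-th column = `j`-th column of `A_j`) and `D'` (`j`-th column =
`(N-1-j)`-th column of `A_j`) are both OAs. -/
def IsSDLOA {α : Type*} [Fintype α] [DecidableEq α] {k N : ℕ} (t : ℕ)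
    (A : Fin N → Fin k → Fin N → α) (lam : ℕ) : Prop :=
  IsLOAOn t A lam ∧
  IsLOAOn t (fun (j : Fin N) (i : Fin k) (s : Fin N) => A s i j) lam ∧
  IsOAOn t (fun (i : Fin k) (j : Fin N) => A j i j) lam ∧
  IsOAOn t (fun (i : Fin k) (j : Fin N) => A j i (Fin.rev j)) lam

/-- A `t`-multimagic square of order `n`: an `n × n` matrix whose entries are the
consecutive integers `0, …, n^2 - 1` and such that, for every `1 ≤ e ≤ t`,
the entrywise `e`-th power has equal row sums, column sums, and sums on both
diagonals. -/
def IsMultimagic (n t : ℕ) (M : Fin n → Fin n → ℕ) : Prop :=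
  (∀ i j, M i j < n ^ 2) ∧
  (Function.Injective fun p : Fin n × Fin n => M p.1 p.2) ∧
  ∀ e, 1 ≤ e → e ≤ t → ∃ S,
    (∀ i, ∑ j, (M i j) ^ e = S) ∧ (∀ j, ∑ i, (M i j) ^ e = S) ∧
    (∑ i, (M i i) ^ e = S) ∧ (∑ i, (M i (Fin.rev i)) ^ e = S)

/-- A set of `m` complementary `t`-multimagic squares of order `n`, `m`-CMS(`n`,`t`):
`m` multimagic squares such that summing the `(t+1)`-st powers of the entries over
all `m` squares along any fixed row, any fixed column, or either diagonal always
gives `m · S_{t+1}(n)` (the conditions are stated multiplied through by `n`). -/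
def IsCMS (m n t : ℕ) (B : Fin m → Fin n → Fin n → ℕ) : Prop :=
  (∀ s, IsMultimagic n t (B s)) ∧
  (∀ i, n * ∑ s, ∑ j, (B s i j) ^ (t + 1) = m * ∑ k ∈ Finset.range (n ^ 2), k ^ (t + 1)) ∧
  (∀ j, n * ∑ s, ∑ i, (B s i j) ^ (t + 1) = m * ∑ k ∈ Finset.range (n ^ 2), k ^ (t + 1)) ∧
  (n * ∑ s, ∑ i, (B s i i) ^ (t + 1) = m * ∑ k ∈ Finset.range (n ^ 2), k ^ (t + 1)) ∧
  (n * ∑ s, ∑ i, (B s i (Fin.rev i)) ^ (t + 1) = m * ∑ k ∈ Finset.range (n ^ 2), k ^ (t + 1))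

/-- Any `t` rows of the matrix `M` are linearly independent. -/
def RowsIndep {F : Type*} [Field F] {m' : Type*} {s : ℕ} (t : ℕ)
    (M : Matrix m' (Fin s) F) : Prop :=
  ∀ rows : Fin t → m', Function.Injective rows → LinearIndependent F fun i => M (rows i)

/-- The block matrix `(A, B)` (with `A, B` of the same shape) is nonsingular, phrased
via bijectivity of the associated linear map. -/
def NonsingularPair {F : Type*} [Field F] {m' : Type*} {s : ℕ}
    (A B : Matrix m' (Fin s) F) : Prop :=
  Function.Bijective fun p : (Fin s → F) × (Fin s → F) => A.mulVec p.1 + B.mulVec p.2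


lemma fiber_card_eq {F : Type} [Field F] [Fintype F] [DecidableEq F] {s t : ℕ}
    (M : Matrix (Fin t) (Fin s) F) (hM : Function.Surjective M.mulVec) (y : Fin t → F) :
    (Finset.univ.filter fun v : Fin s → F => M.mulVec v = y).card
      = Fintype.card F ^ s / Fintype.card F ^ t := by
  have key : ∀ y₁ y₂ : Fin t → F,
      (Finset.univ.filter fun v : Fin s → F => M.mulVec v = y₁).card
        = (Finset.univ.filter fun v : Fin s → F => M.mulVec v = y₂).card := by
    intro y₁ y₂
    obtain ⟨x₁, hx₁⟩ := hM y₁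
    obtain ⟨x₂, hx₂⟩ := hM y₂
    apply Finset.card_bij' (fun v _ => v + (x₂ - x₁)) (fun v _ => v + (x₁ - x₂))
    · intro v hv
      simp only [mem_filter, mem_univ, true_and] at hv ⊢
      simp [Matrix.mulVec_add, Matrix.mulVec_sub, hv, hx₁, hx₂]
    · intro v hv
      simp only [mem_filter, mem_univ, true_and] at hv ⊢
      simp [Matrix.mulVec_add, Matrix.mulVec_sub, hv, hx₁, hx₂]
    · intro v _; abel
    · intro v _; abel
  have total : Fintype.card F ^ t
        * (Finset.univ.filter fun v : Fin s → F => M.mulVec v = y).card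
      = Fintype.card F ^ s := by
    have := Finset.card_eq_sum_card_fiberwise
      (f := fun v : Fin s → F => M.mulVec v) (s := Finset.univ) (t := Finset.univ)
      (fun v _ => mem_univ _)
    simp only [Finset.card_univ] at this
    rw [Fintype.card_fun, Fintype.card_fin] at this
    rw [this]
    rw [Finset.sum_congr rfl (fun y' _ => key y' y), Finset.sum_const, Finset.card_univ,
      Fintype.card_fun, Fintype.card_fin, smul_eq_mul]
  have hpos : 0 < Fintype.card F ^ t := pow_pos Fintype.card_pos t
  rw [← total, Nat.mul_div_cancel_left _ hpos]

lemma surj_of_rowsIndep {F : Type} [Field F] [Fintype F] [DecidableEq F] {s t : ℕ}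
    (M : Matrix (Fin t) (Fin s) F) (h : LinearIndependent F fun i => M i) :
    Function.Surjective M.mulVec := by
  have hrank : M.rank = t := by
    have := LinearIndependent.rank_matrix (M := M) h
    simpa using this
  have htop : LinearMap.range M.mulVecLin = ⊤ := by
    apply Submodule.eq_top_of_finrank_eq
    rw [← Matrix.rank, hrank, Module.finrank_fintype_fun_eq_card, Fintype.card_fin]
  intro y
  have : y ∈ LinearMap.range M.mulVecLin := htop ▸ Submodule.mem_top
  obtain ⟨v, hv⟩ := this
  exact ⟨v, hv⟩

theorem loa_of_matrix' {F : Type} [Field F] [Fintype F] [DecidableEq F] {k s t : ℕ}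
    (E : Matrix (Fin k) (Fin k) F) (hE : IsUnit E.det)
    (cols : Fin s → Fin k) (hcols : Function.Injective cols)
    (h1 : ∀ rows : Fin t → Fin k, Function.Injective rows →
      LinearIndependent F fun i => (Matrix.of fun i j => E i (cols j)) (rows i)) :
    ∃ A : Fin (Fintype.card F ^ (k - s)) → Fin k → Fin (Fintype.card F ^ s) → F,
      (∀ b, (∀ rows : Fin t → Fin k, Function.Injective rows → ∀ x : Fin t → F,
        (Finset.univ.filter fun c => ∀ i, A b (rows i) c = x i).card
          = Fintype.card F ^ s / Fintype.card F ^ t) ∧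
        Function.Injective fun c => fun i => A b i c) ∧
      ∀ x : Fin k → F, ∃! p : Fin (Fintype.card F ^ (k - s)) × Fin (Fintype.card F ^ s),
        (fun i => A p.1 i p.2) = x := by
  classical
  have hsk : s ≤ k := by
    have := Fintype.card_le_of_injective cols hcols
    simpa using this
  set q := Fintype.card F with hq
  let T : Finset (Fin k) := (Finset.univ.image cols)ᶜ
  have hT : Fintype.card T = k - s := by
    rw [Fintype.card_coe]
    simp only [T, Finset.card_compl, Finset.card_image_of_injective _ hcols, Finset.card_univ,
      Fintype.card_fin]
  let g : Fin (k - s) ≃ T := (Fintype.equivFinOfCardEq hT).symm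
  let f : Fin s ⊕ Fin (k - s) → Fin k := Sum.elim cols (fun j => (g j : Fin k))
  have hf : Function.Bijective f := by
    rw [Fintype.bijective_iff_injective_and_card]
    constructor
    · rintro (a | a) (b | b) hab <;>
        simp only [f, Sum.elim_inl, Sum.elim_inr] at hab
      · exact congrArg Sum.inl (hcols hab)
      · exfalso
        have h1' : cols a ∈ Finset.univ.image cols := Finset.mem_image_of_mem cols (mem_univ a)
        have h2' : (g b : Fin k) ∈ T := (g b).2
        rw [Finset.mem_compl] at h2'
        exact h2' (hab ▸ h1')
      · exfalso
        have h1' : cols b ∈ Finset.univ.image cols := Finset.mem_image_of_mem cols (mem_univ b)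
        have h2' : (g a : Fin k) ∈ T := (g a).2
        rw [Finset.mem_compl] at h2'
        exact h2' (hab ▸ h1')
      · exact congrArg Sum.inr (g.injective (Subtype.ext hab))
    · simp [Nat.add_sub_cancel' hsk]
  let e : (Fin s ⊕ Fin (k - s)) ≃ Fin k := Equiv.ofBijective f hf
  have he_inl : ∀ j, e (Sum.inl j) = cols j := fun j => rfl
  let vx : Fin (q ^ s) ≃ (Fin s → F) :=
    (Fintype.equivFinOfCardEq (by simp [hq, Fintype.card_fun])).symm
  let vy : Fin (q ^ (k - s)) ≃ (Fin (k - s) → F) :=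
    (Fintype.equivFinOfCardEq (by simp [hq, Fintype.card_fun])).symm
  let w : Fin (q ^ (k - s)) → Fin (q ^ s) → Fin k → F :=
    fun b c m => Sum.elim (vx c) (vy b) (e.symm m)
  have hEinj : Function.Injective E.mulVec :=
    Matrix.mulVec_injective_iff_isUnit.mpr ((Matrix.isUnit_iff_isUnit_det E).mpr hE)
  have hEsurj : Function.Surjective E.mulVec :=
    Matrix.mulVec_surjective_iff_isUnit.mpr ((Matrix.isUnit_iff_isUnit_det E).mpr hE)
  have hΦ : Function.Bijective
      (fun p : Fin (q ^ (k - s)) × Fin (q ^ s) => E.mulVec (w p.1 p.2)) := by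
    constructor
    · intro p p' hpp
      have hww : w p.1 p.2 = w p'.1 p'.2 := hEinj hpp
      have hc : vx p.2 = vx p'.2 := by
        funext j
        have := congrFun hww (e (Sum.inl j))
        simpa [w, Equiv.symm_apply_apply] using this
      have hb : vy p.1 = vy p'.1 := by
        funext j
        have := congrFun hww (e (Sum.inr j))
        simpa [w, Equiv.symm_apply_apply] using this
      exact Prod.ext (vy.injective hb) (vx.injective hc)
    · intro x
      obtain ⟨u, hu⟩ := hEsurj x
      refine ⟨(vy.symm fun j => u (e (Sum.inr j)), vx.symm fun j => u (e (Sum.inl j))), ?_⟩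
      have hwu : w (vy.symm fun j => u (e (Sum.inr j))) (vx.symm fun j => u (e (Sum.inl j))) = u := by
        funext m
        rcases hm : e.symm m with j | j
        · have hem : e (Sum.inl j) = m := by rw [← hm, Equiv.apply_symm_apply]
          simp [w, hm, hem, Equiv.apply_symm_apply]
        · have hem : e (Sum.inr j) = m := by rw [← hm, Equiv.apply_symm_apply]
          simp [w, hm, hem, Equiv.apply_symm_apply]
      simpa [hwu] using hu
  refine ⟨fun b i c => E.mulVec (w b c) i, fun b => ⟨?_, ?_⟩, ?_⟩
  · -- OA property
    intro rows hr x
    set M : Matrix (Fin t) (Fin s) F := Matrix.of fun i j => E (rows i) (cols j) with hM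
    have hind : LinearIndependent F fun i => M i := h1 rows hr
    have hsurj : Function.Surjective M.mulVec := surj_of_rowsIndep M hind
    set d : Fin t → F := fun i => ∑ j, E (rows i) (e (Sum.inr j)) * vy b j with hd
    have hkey : ∀ (c : Fin (q ^ s)) (i : Fin t),
        E.mulVec (w b c) (rows i) = M.mulVec (vx c) i + d i := by
      intro c i
      have hrw : ∀ m : Fin k, E (rows i) m * w b c m
          = (fun p : Fin s ⊕ Fin (k - s) =>
              Sum.elim (fun j => E (rows i) (cols j) * vx c j)
                (fun j => E (rows i) (e (Sum.inr j)) * vy b j) p) (e.symm m) := by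
        intro m
        rcases hm : e.symm m with j | j
        · have hem : e (Sum.inl j) = m := by rw [← hm, Equiv.apply_symm_apply]
          subst hem
          simp only [w, Equiv.symm_apply_apply, Sum.elim_inl]
          rw [he_inl]
        · have hem : e (Sum.inr j) = m := by rw [← hm, Equiv.apply_symm_apply]
          subst hem
          simp [w, Equiv.symm_apply_apply]
      calc E.mulVec (w b c) (rows i)
          = ∑ m, E (rows i) m * w b c m := by
            simp [Matrix.mulVec, dotProduct]
        _ = ∑ p : Fin s ⊕ Fin (k - s),
              Sum.elim (fun j => E (rows i) (cols j) * vx c j)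
                (fun j => E (rows i) (e (Sum.inr j)) * vy b j) p := by
            rw [Finset.sum_congr rfl (fun m _ => hrw m)]
            exact Fintype.sum_equiv e.symm _ _ (fun m => rfl)
        _ = M.mulVec (vx c) i + d i := by
            rw [Fintype.sum_sum_type]
            simp [Matrix.mulVec, dotProduct, hM, hd]
    have hcond : ∀ c : Fin (q ^ s),
        (∀ i, E.mulVec (w b c) (rows i) = x i) ↔ M.mulVec (vx c) = fun i => x i - d i := by
      intro c
      rw [funext_iff]
      refine forall_congr' fun i => ?_
      rw [hkey c i]
      constructor
      · intro h'; rw [← h']; ring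
      · intro h'; rw [h']; ring
    have hbij : (Finset.univ.filter fun c : Fin (q ^ s) =>
          ∀ i, E.mulVec (w b c) (rows i) = x i).card
        = (Finset.univ.filter fun v : Fin s → F =>
            M.mulVec v = fun i => x i - d i).card := by
      apply Finset.card_bij' (fun c _ => vx c) (fun v _ => vx.symm v)
      · intro c hc
        simp only [mem_filter, mem_univ, true_and] at hc ⊢
        exact (hcond c).mp hc
      · intro v hv
        simp only [mem_filter, mem_univ, true_and] at hv ⊢
        rw [hcond]
        simpa [Equiv.apply_symm_apply] using hv
      · intro c _; exact vx.symm_apply_apply c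
      · intro v _; exact vx.apply_symm_apply v
    rw [hbij]
    exact fiber_card_eq M hsurj _
  · -- simple
    intro c₁ c₂ hc
    have : (fun p : Fin (q ^ (k - s)) × Fin (q ^ s) => E.mulVec (w p.1 p.2)) (b, c₁)
        = (fun p : Fin (q ^ (k - s)) × Fin (q ^ s) => E.mulVec (w p.1 p.2)) (b, c₂) := by
      funext i
      exact congrFun hc i
    exact (Prod.ext_iff.mp (hΦ.1 this)).2
  · -- exists unique
    intro x
    obtain ⟨p, hp, hp'⟩ := hΦ.existsUnique x
    exact ⟨p, by funext i; exact congrFun hp i, fun p' hp'' => hp' p' (by funext i; exact congrFun hp'' i)⟩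

/-- If a nonsingular `k × k` matrix over `F_q` has a `k × s` submatrix
(consisting of `s` of its columns) in which any `t` rows are linearly independent,
then there exists an LOA(q^s; t, k, q). -/
theorem loa_of_matrix {F : Type} [Field F] [Fintype F] [DecidableEq F] {k s t : ℕ}
    (E : Matrix (Fin k) (Fin k) F) (hE : IsUnit E.det)
    (cols : Fin s → Fin k) (hcols : Function.Injective cols)
    (h1 : RowsIndep t (Matrix.of fun i j => E i (cols j))) :
    ∃ A : Fin (Fintype.card F ^ (k - s)) → Fin k → Fin (Fintype.card F ^ s) → F,
      IsLOAOn t A (Fintype.card F ^ s / Fintype.card F ^ t) := by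
  obtain ⟨A, hA, hA2⟩ := loa_of_matrix' E hE cols hcols (fun rows hr => h1 rows hr)
  exact ⟨A, fun b => ⟨(hA b).1, (hA b).2⟩, hA2⟩
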